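/- Let X be a locally compact Hausdorff space and T a densely defined linear operator on C₀(X) whose domain is a dense ideal containing C_c(X), and which is C₀(X)-linear (T(gh) = (Tg)h for g in the domain and h ∈ C₀(X)). Then there exists a continuous function f on X such that Tg = f·g for all g ∈ C_c(X). -/
import Mathlib


open ZeroAtInfty

/-- Let `X` be locally compact Hausdorff and `T` a densely defined linear operator
on `C₀(X)` whose domain `D` is a dense ideal containing `C_c(X)`, and which is
`C₀(X)`-linear: `T(g·h) = (T g)·h`. Then there is a continuous function `f` on `X` with
`T g = f·g` for all compactly supported `g` in the domain. -/
theorem stmt_3 {X : Type*} [TopologicalSpace X] [LocallyCompactSpace X] [T2Space X]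
    (D : Submodule ℂ C₀(X, ℂ))
    (hDense : Dense (D : Set C₀(X, ℂ)))
    (hIdeal : ∀ g ∈ D, ∀ h : C₀(X, ℂ), g * h ∈ D)
    (hCc : ∀ g : C₀(X, ℂ), HasCompactSupport (g : X → ℂ) → g ∈ D)
    (T : D →ₗ[ℂ] C₀(X, ℂ))
    (hTmod : ∀ (g : D) (h : C₀(X, ℂ)),
      T ⟨(g : C₀(X, ℂ)) * h, hIdeal g g.2 h⟩ = T g * h) :
    ∃ f : C(X, ℂ), ∀ (g : C₀(X, ℂ)) (hg : g ∈ D),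
      HasCompactSupport (g : X → ℂ) → ∀ x, T ⟨g, hg⟩ x = f x * g x := by
  -- Key symmetry identity: T g · g' = T g' · g for all g, g' ∈ D.
  have key : ∀ (g g' : D) (x : X),
      T g x * (g' : C₀(X, ℂ)) x = T g' x * (g : C₀(X, ℂ)) x := by
    intro g g' x
    have h1 := hTmod g (g' : C₀(X, ℂ))
    have h2 := hTmod g' (g : C₀(X, ℂ))
    have heq : (⟨(g : C₀(X, ℂ)) * g', hIdeal g g.2 g'⟩ : D)
        = ⟨(g' : C₀(X, ℂ)) * g, hIdeal g' g'.2 g⟩ := Subtype.ext (mul_comm _ _)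
    have h3 : T g * (g' : C₀(X, ℂ)) = T g' * (g : C₀(X, ℂ)) := by
      rw [← h1, ← h2, heq]
    have := congrArg (fun F : C₀(X, ℂ) => F x) h3
    simpa using this
  -- Bump functions: for each x, a compactly supported g ∈ C₀ which is 1 near x.
  have bump : ∀ x : X, ∃ g : C₀(X, ℂ),
      HasCompactSupport (g : X → ℂ) ∧ ∀ᶠ y in nhds x, g y = 1 := by
    intro x
    obtain ⟨k, hk, hxk⟩ := exists_compact_mem_nhds x
    obtain ⟨φ, hφ1, -, hφc, -⟩ :=
      exists_continuous_one_zero_of_isCompact hk isClosed_empty (Set.disjoint_empty k)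
    have hcont : Continuous fun y => ((φ y : ℝ) : ℂ) :=
      Complex.continuous_ofReal.comp φ.continuous
    have hcs : HasCompactSupport fun y => ((φ y : ℝ) : ℂ) :=
      HasCompactSupport.comp_left (g := Complex.ofReal) hφc Complex.ofReal_zero
    refine ⟨ZeroAtInftyContinuousMap.mk ⟨fun y => ((φ y : ℝ) : ℂ), hcont⟩
      hcs.is_zero_at_infty, hcs, ?_⟩
    filter_upwards [hxk] with y hy
    simp [hφ1 hy]
  choose b hb1 hb2 using bump
  -- The candidate function f.
  have hbD : ∀ x, b x ∈ D := fun x => hCc _ (hb1 x)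
  set F : X → ℂ := fun x => T ⟨b x, hbD x⟩ x with hF
  have hFcont : Continuous F := by
    rw [continuous_iff_continuousAt]
    intro x
    have hTc : ContinuousAt (fun y => T ⟨b x, hbD x⟩ y) x :=
      (T ⟨b x, hbD x⟩).continuous.continuousAt
    apply hTc.congr
    filter_upwards [hb2 x] with y hy
    have h1 : (b y) y = 1 := (hb2 y).self_of_nhds
    have := key ⟨b y, hbD y⟩ ⟨b x, hbD x⟩ y
    simp only [hy, h1, mul_one] at this
    simpa [hF] using this.symm
  refine ⟨⟨F, hFcont⟩, ?_⟩
  intro g hg _ x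
  have := key ⟨g, hg⟩ ⟨b x, hbD x⟩ x
  have h1 : (b x) x = 1 := (hb2 x).self_of_nhds
  simp only [h1, mul_one] at this
  simpa [hF] using this
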